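/- Let e ∈ ℝⁿ and f ∈ ℝᵐ be nonzero and let 𝒜(T) = (Te, Tᵀf). Then for every T ∈ ℝ^{m×n}, the orthogonal projection of T onto the range of 𝒜* (equivalently, onto (ker 𝒜)ᗮ) with respect to the Frobenius inner product is P(T) = (1/‖e‖²) (Te) eᵀ + (1/‖f‖²) f (fᵀT) − (⟨f, Te⟩/(‖e‖²‖f‖²)) f eᵀ. -/
import Mathlib
open Matrix

private lemma vmv_mulVec {m n : ℕ} (w : Fin m → ℝ) (v u : Fin n → ℝ) :
    vecMulVec w v *ᵥ u = (v ⬝ᵥ u) • w := by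
  funext i
  simp only [vecMulVec, mulVec, dotProduct, Pi.smul_apply, smul_eq_mul, of_apply, mul_assoc,
    Finset.mul_sum]
  rw [Finset.sum_mul]
  exact Finset.sum_congr rfl fun j _ => by ring

private lemma vmv_transpose {m n : ℕ} (w : Fin m → ℝ) (v : Fin n → ℝ) :
    (vecMulVec w v)ᵀ = vecMulVec v w := by
  ext i j; simp [vecMulVec, mul_comm]

/-- For nonzero `e ∈ ℝⁿ`, `f ∈ ℝᵐ`, the orthogonal projection (Frobenius inner product) of
`T ∈ ℝ^{m×n}` onto the range of `𝒜* : (y,x) ↦ y eᵀ + f xᵀ` is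
`P T = (1/‖e‖²)(Te)eᵀ + (1/‖f‖²) f (fᵀT) − (⟨f,Te⟩/(‖e‖²‖f‖²)) f eᵀ`:
`P T` lies in `ran 𝒜*` and is the nearest point of `ran 𝒜*` to `T` in Frobenius norm. -/
theorem stmt_8 {m n : ℕ} (e : Fin n → ℝ) (f : Fin m → ℝ) (he : e ≠ 0) (hf : f ≠ 0)
    (T : Matrix (Fin m) (Fin n) ℝ) :
    ((e ⬝ᵥ e)⁻¹ • vecMulVec (T.mulVec e) e + (f ⬝ᵥ f)⁻¹ • vecMulVec f (T.transpose.mulVec f)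
        - ((f ⬝ᵥ T.mulVec e) / ((e ⬝ᵥ e) * (f ⬝ᵥ f))) • vecMulVec f e) ∈
      Set.range (fun p : (Fin m → ℝ) × (Fin n → ℝ) => vecMulVec p.1 e + vecMulVec f p.2) ∧
    ∀ S ∈ Set.range (fun p : (Fin m → ℝ) × (Fin n → ℝ) => vecMulVec p.1 e + vecMulVec f p.2),
      (∑ i, ∑ j, (T - ((e ⬝ᵥ e)⁻¹ • vecMulVec (T.mulVec e) e
          + (f ⬝ᵥ f)⁻¹ • vecMulVec f (T.transpose.mulVec f)
          - ((f ⬝ᵥ T.mulVec e) / ((e ⬝ᵥ e) * (f ⬝ᵥ f))) • vecMulVec f e)) i j ^ 2)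
        ≤ ∑ i, ∑ j, (T - S) i j ^ 2 := by
  have hee : e ⬝ᵥ e ≠ 0 := fun h => he (dotProduct_self_eq_zero.mp h)
  have hff : f ⬝ᵥ f ≠ 0 := fun h => hf (dotProduct_self_eq_zero.mp h)
  set c : ℝ := (f ⬝ᵥ T.mulVec e) / ((e ⬝ᵥ e) * (f ⬝ᵥ f)) with hc
  set P : Matrix (Fin m) (Fin n) ℝ :=
    (e ⬝ᵥ e)⁻¹ • vecMulVec (T.mulVec e) e + (f ⬝ᵥ f)⁻¹ • vecMulVec f (T.transpose.mulVec f)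
      - c • vecMulVec f e with hP
  set y : Fin m → ℝ := (e ⬝ᵥ e)⁻¹ • T.mulVec e - c • f with hy
  set x : Fin n → ℝ := (f ⬝ᵥ f)⁻¹ • T.transpose.mulVec f with hx
  have hrep : P = vecMulVec y e + vecMulVec f x := by
    ext i j
    simp [hP, hy, hx, vecMulVec_apply, mul_comm]
    ring
  -- key orthogonality facts
  have hfe : (T.transpose.mulVec f) ⬝ᵥ e = f ⬝ᵥ T.mulVec e := by
    rw [Matrix.mulVec_transpose, Matrix.dotProduct_mulVec]
  have hRe : (T - P) *ᵥ e = 0 := by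
    rw [Matrix.sub_mulVec, hP]
    rw [Matrix.sub_mulVec, Matrix.add_mulVec, Matrix.smul_mulVec,
      Matrix.smul_mulVec, Matrix.smul_mulVec, vmv_mulVec, vmv_mulVec, vmv_mulVec,
      hfe]
    funext i
    simp only [Pi.sub_apply, Pi.add_apply, Pi.smul_apply, smul_eq_mul, Pi.zero_apply, hc]
    field_simp
    ring
  have hRf : (T - P)ᵀ *ᵥ f = 0 := by
    rw [Matrix.transpose_sub, Matrix.sub_mulVec, hP]
    rw [Matrix.transpose_sub, Matrix.transpose_add, Matrix.transpose_smul, Matrix.transpose_smul,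
      Matrix.transpose_smul, vmv_transpose, vmv_transpose, vmv_transpose,
      Matrix.sub_mulVec, Matrix.add_mulVec, Matrix.smul_mulVec, Matrix.smul_mulVec,
      Matrix.smul_mulVec, vmv_mulVec, vmv_mulVec, vmv_mulVec]
    have h1 : T.mulVec e ⬝ᵥ f = f ⬝ᵥ T.mulVec e := dotProduct_comm _ _
    rw [h1]
    funext j
    simp only [Pi.sub_apply, Pi.add_apply, Pi.smul_apply, smul_eq_mul, Pi.zero_apply, hc]
    field_simp
    ring
  constructor
  · exact ⟨(y, x), hrep.symm⟩
  · rintro S ⟨⟨a, b⟩, rfl⟩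
    simp only at *
    set R : Matrix (Fin m) (Fin n) ℝ := T - P with hR
    set D : Matrix (Fin m) (Fin n) ℝ := P - (vecMulVec a e + vecMulVec f b) with hD
    have hDrep : D = vecMulVec (y - a) e + vecMulVec f (x - b) := by
      rw [hD, hrep]
      ext i j
      simp [vecMulVec_apply]
      ring
    have hTS : T - (vecMulVec a e + vecMulVec f b) = R + D := by
      rw [hR, hD]; abel
    have hcross : ∑ i, ∑ j, R i j * D i j = 0 := by
      have h1 : ∀ i j, R i j * D i j = (y - a) i * (R i j * e j) + (x - b) j * (R i j * f i) := by
        intro i j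
        rw [hDrep]
        simp [vecMulVec_apply]
        ring
      calc ∑ i, ∑ j, R i j * D i j
          = ∑ i, ∑ j, ((y - a) i * (R i j * e j) + (x - b) j * (R i j * f i)) := by
            exact Finset.sum_congr rfl fun i _ => Finset.sum_congr rfl fun j _ => h1 i j
        _ = ∑ i, (y - a) i * ((R *ᵥ e) i) + ∑ j, (x - b) j * ((Rᵀ *ᵥ f) j) := by
            simp only [Finset.sum_add_distrib]
            congr 1
            · exact Finset.sum_congr rfl fun i _ => by
                simp [mulVec, dotProduct, Finset.mul_sum]
            · rw [Finset.sum_comm]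
              refine Finset.sum_congr rfl fun j _ => ?_
              simp only [mulVec, dotProduct, transpose_apply]
              rw [Finset.mul_sum]
        _ = 0 := by rw [hRe, hRf]; simp
    rw [hTS]
    have : ∑ i, ∑ j, (R + D) i j ^ 2
        = ∑ i, ∑ j, R i j ^ 2 + 2 * (∑ i, ∑ j, R i j * D i j) + ∑ i, ∑ j, D i j ^ 2 := by
      simp only [Matrix.add_apply]
      rw [Finset.mul_sum, ← Finset.sum_add_distrib, ← Finset.sum_add_distrib]
      refine Finset.sum_congr rfl fun i _ => ?_
      rw [Finset.mul_sum, ← Finset.sum_add_distrib, ← Finset.sum_add_distrib]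
      exact Finset.sum_congr rfl fun j _ => by ring
    rw [this, hcross]
    have hD2 : 0 ≤ ∑ i, ∑ j, D i j ^ 2 :=
      Finset.sum_nonneg fun i _ => Finset.sum_nonneg fun j _ => sq_nonneg _
    linarith
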